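/- Let P ⊂ ℝ^n be an n-dimensional lattice polytope. For each i ∈ {1,…,n} fix C_i ∈ ℤ with u_i + C_i ≥ 0 on P and set P_i := {(u,h) ∈ ℝ^n × ℝ : u ∈ P, 0 ≤ h ≤ u_i + C_i}. Suppose there are polynomials E and E_1,…,E_n with deg E ≤ n, deg E_i ≤ n+1, E(0) = E_i(0) = 1, E(k) = #(kP ∩ ℤ^n) and E_i(k) = #(kP_i ∩ ℤ^{n+1}) for all positive integers k. If there exist n+1 distinct positive integers k_0 < k_1 < … < k_n and a vector λ ∈ ℝ^n such that Bc_{k_j}(P) = λ for all j = 0,…,n, then Bc_k(P) = λ for every positive integer k, and λ = Bc(P). -/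

import Mathlib

open scoped BigOperators
open MeasureTheory Polynomial Filter

noncomputable section

/-- A point of `ℝ^n` is a lattice point if all its coordinates are integers. -/
def isLatticePoint (n : ℕ) (u : Fin n → ℝ) : Prop := ∀ i, ∃ z : ℤ, u i = (z : ℝ)

/-- The set of lattice points of a subset `S ⊆ ℝ^n`. -/
def latticePts (n : ℕ) (S : Set (Fin n → ℝ)) : Set (Fin n → ℝ) :=
  {u ∈ S | isLatticePoint n u}

/-- The dilation `kS = {k • x : x ∈ S}`. -/
def dilate (n : ℕ) (k : ℕ) (S : Set (Fin n → ℝ)) : Set (Fin n → ℝ) :=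
  (fun x => (k : ℝ) • x) '' S

/-- A lattice polytope: the convex hull of a nonempty finite set of lattice points. -/
def IsLatticePolytope (n : ℕ) (P : Set (Fin n → ℝ)) : Prop :=
  ∃ V : Finset (Fin n → ℝ), V.Nonempty ∧ (∀ v ∈ V, isLatticePoint n v) ∧
    P = convexHull ℝ (V : Set (Fin n → ℝ))

/-- `P` is full-dimensional (`n`-dimensional) iff it has nonempty interior. -/
def IsFullDim (n : ℕ) (P : Set (Fin n → ℝ)) : Prop := (interior P).Nonempty

/-- The `k`-th quantized barycenter
`Bc_k(P) = (1/(k·#(kP ∩ ℤ^n))) · Σ_{u ∈ kP ∩ ℤ^n} u`. -/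
def Bck (n k : ℕ) (P : Set (Fin n → ℝ)) : Fin n → ℝ :=
  ((k : ℝ) * ((latticePts n (dilate n k P)).ncard : ℝ))⁻¹ •
    ∑ᶠ u ∈ latticePts n (dilate n k P), u

/-- The barycenter `Bc(P) = (∫_P x dx)/vol(P)`. -/
def Bc (n : ℕ) (P : Set (Fin n → ℝ)) : Fin n → ℝ :=
  fun i => (∫ x in P, x i) / (volume P).toReal

/-- The rooftop polytope over `P` with roof function `f`. -/
def rooftop (n : ℕ) (P : Set (Fin n → ℝ)) (f : (Fin n → ℝ) → ℝ) : Set (Fin (n+1) → ℝ) :=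
  {w | ∃ u ∈ P, ∃ h : ℝ, 0 ≤ h ∧ h ≤ f u ∧ w = Fin.snoc u h}

/-! ### Lattice point infrastructure -/

/-- Integer points of a set. -/
def intPts (m : ℕ) (S : Set (Fin m → ℝ)) : Set (Fin m → ℤ) :=
  {v | (fun i => (v i : ℝ)) ∈ S}

lemma intCast_injective (m : ℕ) :
    Function.Injective (fun v : Fin m → ℤ => (fun i => (v i : ℝ))) := by
  intro v w h
  funext i
  have : ((v i : ℝ)) = (w i : ℝ) := congrFun h i
  exact_mod_cast this

lemma latticePts_eq_image (m : ℕ) (S : Set (Fin m → ℝ)) :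
    latticePts m S = (fun v : Fin m → ℤ => (fun i => (v i : ℝ))) '' intPts m S := by
  ext u
  constructor
  · rintro ⟨hS, hlat⟩
    choose z hz using hlat
    refine ⟨z, ?_, ?_⟩
    · show (fun i => (z i : ℝ)) ∈ S
      have : (fun i => (z i : ℝ)) = u := by funext i; exact (hz i).symm
      rwa [this]
    · funext i; exact (hz i).symm
  · rintro ⟨v, hv, rfl⟩
    exact ⟨hv, fun i => ⟨v i, rfl⟩⟩

lemma ncard_latticePts (m : ℕ) (S : Set (Fin m → ℝ)) :
    (latticePts m S).ncard = (intPts m S).ncard := by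
  rw [latticePts_eq_image]
  exact Set.ncard_image_of_injective _ (intCast_injective m)

lemma intPts_finite (m : ℕ) {S : Set (Fin m → ℝ)} {R : ℝ}
    (hS : S ⊆ Metric.closedBall 0 R) : (intPts m S).Finite := by
  have : intPts m S ⊆ Set.pi Set.univ (fun _ : Fin m => Set.Icc (-⌈R⌉) ⌈R⌉) := by
    intro v hv
    have hball := hS hv
    rw [Metric.mem_closedBall, dist_zero_right] at hball
    intro i _
    have h1 : |(v i : ℝ)| ≤ R := by
      calc |(v i : ℝ)| = ‖(fun i => (v i : ℝ)) i‖ := by simp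
        _ ≤ ‖(fun i => (v i : ℝ) : Fin m → ℝ)‖ := norm_le_pi_norm (fun i => (v i : ℝ)) i
        _ ≤ R := hball
    rw [abs_le] at h1
    constructor
    · have : (-⌈R⌉ : ℝ) ≤ (v i : ℝ) := le_trans (by simpa using neg_le_neg (Int.le_ceil R)) h1.1
      exact_mod_cast this
    · have : (v i : ℝ) ≤ (⌈R⌉ : ℝ) := le_trans h1.2 (Int.le_ceil R)
      exact_mod_cast this
  exact (Set.Finite.pi (fun _ => Set.finite_Icc _ _)).subset this

lemma mem_dilate_iff (m k : ℕ) (hk : 0 < k) (S : Set (Fin m → ℝ)) (x : Fin m → ℝ) :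
    x ∈ dilate m k S ↔ ((k : ℝ)⁻¹ • x) ∈ S := by
  have hk' : (k : ℝ) ≠ 0 := Nat.cast_ne_zero.mpr hk.ne'
  constructor
  · rintro ⟨y, hy, rfl⟩
    simpa [smul_smul, inv_mul_cancel₀ hk'] using hy
  · intro h
    exact ⟨(k : ℝ)⁻¹ • x, h, by simp [smul_smul, mul_inv_cancel₀ hk']⟩

lemma intPts_dilate (m k : ℕ) (hk : 0 < k) (S : Set (Fin m → ℝ)) :
    intPts m (dilate m k S) = {v : Fin m → ℤ | (fun i => (v i : ℝ) / k) ∈ S} := by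
  ext v
  rw [Set.mem_setOf_eq, intPts, Set.mem_setOf_eq, mem_dilate_iff m k hk]
  constructor <;> intro h <;> convert h using 1 <;>
    funext i <;> simp [Pi.smul_apply, div_eq_inv_mul]

/-! ### Equidistribution of lattice points -/

/-- The half-open cube of side `1/k` at `v/k`. -/
def upcube (m k : ℕ) (v : Fin m → ℤ) : Set (Fin m → ℝ) :=
  Set.pi Set.univ (fun i => Set.Ico ((v i : ℝ) / k) (((v i : ℝ) + 1) / k))

/-- The floor-rounding map at scale `k`. -/
def floorMap (m k : ℕ) (x : Fin m → ℝ) : Fin m → ℝ :=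
  fun i => (⌊(k : ℝ) * x i⌋ : ℝ) / k

lemma mem_upcube_iff (m k : ℕ) (hk : 0 < k) (v : Fin m → ℤ) (x : Fin m → ℝ) :
    x ∈ upcube m k v ↔ ∀ i, ⌊(k : ℝ) * x i⌋ = v i := by
  have hk' : (0 : ℝ) < k := Nat.cast_pos.mpr hk
  unfold upcube
  rw [Set.mem_univ_pi]
  refine forall_congr' fun i => ?_
  rw [Set.mem_Ico, Int.floor_eq_iff, div_le_iff₀ hk', lt_div_iff₀ hk']
  constructor
  · rintro ⟨h1, h2⟩
    exact ⟨by linarith [mul_comm (x i) (k:ℝ)], by push_cast; linarith [mul_comm (x i) (k:ℝ)]⟩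
  · rintro ⟨h1, h2⟩
    push_cast at h2
    exact ⟨by linarith [mul_comm (x i) (k:ℝ)], by linarith [mul_comm (x i) (k:ℝ)]⟩

lemma volume_upcube (m k : ℕ) (hk : 0 < k) (v : Fin m → ℤ) :
    volume (upcube m k v) = (ENNReal.ofReal ((k : ℝ)⁻¹)) ^ m := by
  have hk' : (0 : ℝ) < k := Nat.cast_pos.mpr hk
  rw [upcube, volume_pi_pi]
  have : ∀ i : Fin m, volume (Set.Ico ((v i : ℝ) / k) (((v i : ℝ) + 1) / k))
      = ENNReal.ofReal ((k : ℝ)⁻¹) := by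
    intro i
    rw [Real.volume_Ico]
    congr 1
    field_simp
    ring
  simp [this]

lemma upcube_measurable (m k : ℕ) (v : Fin m → ℤ) : MeasurableSet (upcube m k v) :=
  MeasurableSet.univ_pi (fun _ => measurableSet_Ico)

/-- The approximating set `T_k = {x : floorMap k x ∈ K}`. -/
def approxSet (m k : ℕ) (K : Set (Fin m → ℝ)) : Set (Fin m → ℝ) :=
  floorMap m k ⁻¹' K

lemma floorMap_measurable (m k : ℕ) : Measurable (floorMap m k) := by
  refine measurable_pi_lambda _ fun i => ?_
  exact (measurable_from_top.comp (Int.measurable_floor.comp ((measurable_const.mul (measurable_pi_apply i))))).div_const _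

lemma approxSet_measurable (m k : ℕ) {K : Set (Fin m → ℝ)} (hK : MeasurableSet K) :
    MeasurableSet (approxSet m k K) := (floorMap_measurable m k) hK

lemma approxSet_eq_biUnion (m k : ℕ) (hk : 0 < k) (K : Set (Fin m → ℝ)) :
    approxSet m k K = ⋃ v ∈ {v : Fin m → ℤ | (fun i => (v i : ℝ) / k) ∈ K}, upcube m k v := by
  ext x
  simp only [Set.mem_iUnion, Set.mem_setOf_eq, approxSet, Set.mem_preimage]
  constructor
  · intro hx
    exact ⟨fun i => ⌊(k : ℝ) * x i⌋, hx, (mem_upcube_iff m k hk _ x).2 fun i => rfl⟩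
  · rintro ⟨v, hv, hx⟩
    have := (mem_upcube_iff m k hk v x).1 hx
    have hfm : floorMap m k x = fun i => (v i : ℝ) / k := by
      funext i; rw [floorMap, this i]
    rwa [hfm]

lemma dist_floorMap (m k : ℕ) (hk : 0 < k) (x : Fin m → ℝ) :
    dist (floorMap m k x) x < (k : ℝ)⁻¹ + (k : ℝ)⁻¹ := by
  have hk' : (0 : ℝ) < k := Nat.cast_pos.mpr hk
  have hpos : (0:ℝ) < (k : ℝ)⁻¹ + (k : ℝ)⁻¹ := by positivity
  rw [dist_pi_lt_iff hpos]
  intro i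
  rw [Real.dist_eq, abs_sub_lt_iff]
  have h1 : (⌊(k : ℝ) * x i⌋ : ℝ) ≤ (k : ℝ) * x i := Int.floor_le _
  have h2 : (k : ℝ) * x i - 1 < (⌊(k : ℝ) * x i⌋ : ℝ) := Int.sub_one_lt_floor _
  have hinv : (0:ℝ) < (k:ℝ)⁻¹ := by positivity
  have h3 : (k:ℝ)⁻¹ * k = 1 := inv_mul_cancel₀ hk'.ne'
  constructor
  · show (⌊(k : ℝ) * x i⌋ : ℝ) / k - x i < _
    rw [div_sub' hk'.ne', div_lt_iff₀ hk']
    nlinarith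
  · show x i - (⌊(k : ℝ) * x i⌋ : ℝ) / k < _
    rw [sub_div' hk'.ne', div_lt_iff₀ hk']
    nlinarith

open scoped Topology

lemma dilate_subset_ball (m k : ℕ) {K : Set (Fin m → ℝ)} {R : ℝ}
    (hbd : K ⊆ Metric.closedBall 0 R) :
    dilate m k K ⊆ Metric.closedBall 0 ((k : ℝ) * R) := by
  rintro x ⟨y, hy, rfl⟩
  have := hbd hy
  rw [Metric.mem_closedBall, dist_zero_right] at this ⊢
  rw [norm_smul]
  calc ‖(k : ℝ)‖ * ‖y‖ = (k : ℝ) * ‖y‖ := by rw [Real.norm_natCast]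
    _ ≤ (k : ℝ) * R := mul_le_mul_of_nonneg_left this (by positivity)

lemma vset_finite (m k : ℕ) (hk : 0 < k) {K : Set (Fin m → ℝ)} {R : ℝ}
    (hbd : K ⊆ Metric.closedBall 0 R) :
    {v : Fin m → ℤ | (fun i => (v i : ℝ) / k) ∈ K}.Finite := by
  rw [← intPts_dilate m k hk]
  exact intPts_finite m (dilate_subset_ball m k hbd)

lemma upcube_disjoint (m k : ℕ) (hk : 0 < k) {v w : Fin m → ℤ} (hvw : v ≠ w) :
    Disjoint (upcube m k v) (upcube m k w) := by
  rw [Set.disjoint_left]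
  intro x hxv hxw
  apply hvw
  funext i
  rw [← (mem_upcube_iff m k hk v x).1 hxv i, (mem_upcube_iff m k hk w x).1 hxw i]

lemma volume_approxSet (m k : ℕ) (hk : 0 < k) {K : Set (Fin m → ℝ)} {R : ℝ}
    (hbd : K ⊆ Metric.closedBall 0 R) :
    volume (approxSet m k K)
      = ({v : Fin m → ℤ | (fun i => (v i : ℝ) / k) ∈ K}.ncard)
          * (ENNReal.ofReal ((k : ℝ)⁻¹)) ^ m := by
  classical
  have hfin := vset_finite m k hk hbd
  rw [approxSet_eq_biUnion m k hk K, ← hfin.coe_toFinset, Finset.set_biUnion_coe]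
  rw [measure_biUnion_finset ?hd (fun v _ => upcube_measurable m k v)]
  · rw [Finset.sum_congr rfl (fun v _ => volume_upcube m k hk v), Finset.sum_const,
      nsmul_eq_mul, Set.ncard_coe_finset]
  case hd =>
    intro v hv w hw hvw
    exact upcube_disjoint m k hk hvw

theorem tendsto_latticeCount (m : ℕ) (K : Set (Fin m → ℝ)) (hconv : Convex ℝ K)
    (hcl : IsClosed K) (R : ℝ) (hbd : K ⊆ Metric.closedBall 0 R) :
    Tendsto (fun k : ℕ => ((latticePts m (dilate m k K)).ncard : ℝ) / (k : ℝ) ^ m)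
      atTop (𝓝 (volume K).toReal) := by
  have hKm : MeasurableSet K := hcl.measurableSet
  have hBfin : volume (Metric.closedBall (0 : Fin m → ℝ) (R + 2)) ≠ ⊤ :=
    (IsCompact.measure_lt_top (isCompact_closedBall _ _)).ne
  -- eventual containment in a big ball
  have hAsB : ∀ᶠ k : ℕ in atTop, approxSet m k K ⊆ Metric.closedBall 0 (R + 2) := by
    filter_upwards [eventually_ge_atTop 1] with k hk1
    intro x hx
    have hk : 0 < k := hk1
    have hfm : floorMap m k x ∈ K := hx
    have h1 : dist (floorMap m k x) 0 ≤ R := by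
      have := hbd hfm; rwa [Metric.mem_closedBall] at this
    have h2 : dist x (floorMap m k x) < (k : ℝ)⁻¹ + (k : ℝ)⁻¹ := by
      rw [dist_comm]; exact dist_floorMap m k hk x
    have hk' : (1:ℝ) ≤ (k:ℝ) := by exact_mod_cast hk1
    have hinv : (k:ℝ)⁻¹ ≤ 1 := by
      rw [inv_le_one_iff₀]; right; exact hk'
    rw [Metric.mem_closedBall]
    calc dist x 0 ≤ dist x (floorMap m k x) + dist (floorMap m k x) 0 := dist_triangle _ _ _
      _ ≤ ((k:ℝ)⁻¹ + (k:ℝ)⁻¹) + R := by linarith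
      _ ≤ R + 2 := by linarith
  -- a.e. pointwise convergence of indicators
  have h_lim : ∀ᵐ x : (Fin m → ℝ), ∀ᶠ k : ℕ in atTop, x ∈ approxSet m k K ↔ x ∈ K := by
    have hfr : volume (frontier K) = 0 := hconv.addHaar_frontier volume
    filter_upwards [compl_mem_ae_iff.mpr hfr] with x hx
    by_cases hxK : x ∈ interior K
    · obtain ⟨ε, hε, hball⟩ := Metric.isOpen_iff.1 isOpen_interior x hxK
      have hxmem : x ∈ K := interior_subset hxK
      have hsmall : ∀ᶠ k : ℕ in atTop, (k : ℝ)⁻¹ + (k : ℝ)⁻¹ < ε := by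
        have ht : Tendsto (fun k : ℕ => (k : ℝ)⁻¹ + (k : ℝ)⁻¹) atTop (𝓝 (0 + 0)) := by
          refine Tendsto.add ?_ ?_ <;> exact tendsto_inv_atTop_zero.comp tendsto_natCast_atTop_atTop
        rw [add_zero] at ht
        exact ht.eventually (eventually_lt_nhds hε)
      filter_upwards [hsmall, eventually_gt_atTop 0] with k hsk hk
      have : floorMap m k x ∈ Metric.ball x ε :=
        lt_trans (dist_floorMap m k hk x) hsk
      exact ⟨fun _ => hxmem, fun _ => Set.mem_preimage.mpr (interior_subset (hball this))⟩
    · have hxcl : x ∉ closure K := by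
        intro hcl'
        exact hx ⟨hcl', hxK⟩
      obtain ⟨ε, hε, hball⟩ := Metric.isOpen_iff.1 (isOpen_compl_iff.mpr isClosed_closure) x hxcl
      have hxnK : x ∉ K := fun h => hxcl (subset_closure h)
      have hsmall : ∀ᶠ k : ℕ in atTop, (k : ℝ)⁻¹ + (k : ℝ)⁻¹ < ε := by
        have ht : Tendsto (fun k : ℕ => (k : ℝ)⁻¹ + (k : ℝ)⁻¹) atTop (𝓝 (0 + 0)) := by
          refine Tendsto.add ?_ ?_ <;> exact tendsto_inv_atTop_zero.comp tendsto_natCast_atTop_atTop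
        rw [add_zero] at ht
        exact ht.eventually (eventually_lt_nhds hε)
      filter_upwards [hsmall, eventually_gt_atTop 0] with k hsk hk
      have hmem : floorMap m k x ∈ Metric.ball x ε :=
        lt_trans (dist_floorMap m k hk x) hsk
      have : floorMap m k x ∉ K := fun h => hball hmem (subset_closure h)
      exact ⟨fun h => absurd h this, fun h => absurd h hxnK⟩
  have htend : Tendsto (fun k : ℕ => volume (approxSet m k K)) atTop (𝓝 (volume K)) :=
    tendsto_measure_of_ae_tendsto_indicator atTop hKm
      (fun k => approxSet_measurable m k hKm) measurableSet_closedBall hBfin hAsB h_lim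
  have hKfin : volume K ≠ ⊤ := by
    refine ne_top_of_le_ne_top hBfin (measure_mono (hbd.trans ?_))
    exact Metric.closedBall_subset_closedBall (by linarith)
  have htendR : Tendsto (fun k : ℕ => (volume (approxSet m k K)).toReal) atTop
      (𝓝 (volume K).toReal) := (ENNReal.tendsto_toReal hKfin).comp htend
  refine htendR.congr' ?_
  filter_upwards [eventually_gt_atTop 0] with k hk
  have hk' : (0:ℝ) < (k:ℝ) := Nat.cast_pos.mpr hk
  rw [volume_approxSet m k hk hbd]
  rw [ENNReal.toReal_mul, ENNReal.toReal_pow, ENNReal.toReal_ofReal (by positivity),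
    ENNReal.toReal_natCast]
  rw [ncard_latticePts, intPts_dilate m k hk, div_eq_mul_inv, inv_pow]

/-! ### Rooftop geometry -/

lemma mem_rooftop_iff (n : ℕ) (P : Set (Fin n → ℝ)) (f : (Fin n → ℝ) → ℝ)
    (w : Fin (n+1) → ℝ) :
    w ∈ rooftop n P f ↔ Fin.init w ∈ P ∧ 0 ≤ w (Fin.last n) ∧ w (Fin.last n) ≤ f (Fin.init w) := by
  constructor
  · rintro ⟨u, hu, h, h0, hle, rfl⟩
    simpa [Fin.init_snoc, Fin.snoc_last] using ⟨hu, h0, hle⟩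
  · rintro ⟨h1, h2, h3⟩
    exact ⟨_, h1, _, h2, h3, (Fin.snoc_init_self w).symm⟩

lemma init_add_smul (n : ℕ) (a b : ℝ) (w1 w2 : Fin (n+1) → ℝ) :
    Fin.init (a • w1 + b • w2) = a • Fin.init w1 + b • Fin.init w2 := rfl

lemma rooftop_convex (n : ℕ) {P : Set (Fin n → ℝ)} (hP : Convex ℝ P) (i : Fin n) (c : ℝ) :
    Convex ℝ (rooftop n P (fun u => u i + c)) := by
  intro w1 hw1 w2 hw2 a b ha hb hab
  rw [mem_rooftop_iff] at hw1 hw2 ⊢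
  obtain ⟨h1, h2, h3⟩ := hw1
  obtain ⟨h1', h2', h3'⟩ := hw2
  refine ⟨?_, ?_, ?_⟩
  · rw [init_add_smul]
    exact hP h1 h1' ha hb hab
  · have : (a • w1 + b • w2) (Fin.last n) = a * w1 (Fin.last n) + b * w2 (Fin.last n) := rfl
    rw [this]
    positivity
  · have he : (a • w1 + b • w2) (Fin.last n) = a * w1 (Fin.last n) + b * w2 (Fin.last n) := rfl
    have he2 : Fin.init (a • w1 + b • w2) i = a * Fin.init w1 i + b * Fin.init w2 i := rfl
    rw [he, he2]
    have hc : a * c + b * c = c := by rw [← add_mul, hab, one_mul]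
    linarith [mul_le_mul_of_nonneg_left h3 ha, mul_le_mul_of_nonneg_left h3' hb]

lemma rooftop_closed (n : ℕ) {P : Set (Fin n → ℝ)} (hcl : IsClosed P) (i : Fin n) (c : ℝ) :
    IsClosed (rooftop n P (fun u => u i + c)) := by
  have he : rooftop n P (fun u => u i + c)
      = (Fin.init ⁻¹' P) ∩ {w : Fin (n+1) → ℝ | 0 ≤ w (Fin.last n)}
        ∩ {w : Fin (n+1) → ℝ | w (Fin.last n) ≤ w (Fin.castSucc i) + c} := by
    ext w
    rw [mem_rooftop_iff]
    constructor
    · rintro ⟨h1, h2, h3⟩; exact ⟨⟨h1, h2⟩, h3⟩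
    · rintro ⟨⟨h1, h2⟩, h3⟩; exact ⟨h1, h2, h3⟩
  rw [he]
  have hinit : Continuous (Fin.init : (Fin (n+1) → ℝ) → (Fin n → ℝ)) :=
    continuous_pi fun j => continuous_apply _
  refine IsClosed.inter (IsClosed.inter (hcl.preimage hinit) ?_) ?_
  · exact isClosed_le continuous_const (continuous_apply _)
  · exact isClosed_le (continuous_apply _) ((continuous_apply _).add continuous_const)

lemma rooftop_subset_ball (n : ℕ) {P : Set (Fin n → ℝ)} {R : ℝ} (hR : 0 ≤ R)
    (hbd : P ⊆ Metric.closedBall 0 R) (i : Fin n) (c : ℝ) :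
    rooftop n P (fun u => u i + c) ⊆ Metric.closedBall 0 (R + |c|) := by
  intro w hw
  rw [mem_rooftop_iff] at hw
  obtain ⟨h1, h2, h3⟩ := hw
  have hcoord : ∀ j : Fin n, |Fin.init w j| ≤ R := by
    intro j
    have := hbd h1
    rw [Metric.mem_closedBall, dist_zero_right] at this
    calc |Fin.init w j| = ‖Fin.init w j‖ := rfl
      _ ≤ ‖Fin.init w‖ := norm_le_pi_norm _ j
      _ ≤ R := this
  rw [Metric.mem_closedBall, dist_pi_le_iff (by positivity)]
  intro j
  simp only [Pi.zero_apply, Real.dist_eq, sub_zero]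
  refine Fin.lastCases ?_ ?_ j
  · have hub : w (Fin.last n) ≤ R + |c| := by
      have := (hcoord i)
      have hc : c ≤ |c| := le_abs_self c
      have : Fin.init w i ≤ R := (abs_le.1 (hcoord i)).2
      calc w (Fin.last n) ≤ Fin.init w i + c := h3
        _ ≤ R + |c| := by linarith
    rw [abs_le]
    constructor
    · linarith [abs_nonneg c]
    · exact hub
  · intro j'
    have : |Fin.init w j'| ≤ R := hcoord j'
    have h := abs_le.1 this
    rw [abs_le]
    constructor
    · have : -(R + |c|) ≤ -R := by linarith [abs_nonneg c]
      calc -(R + |c|) ≤ -R := this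
        _ ≤ Fin.init w j' := h.1
    · calc (Fin.init w j' : ℝ) ≤ R := h.2
        _ ≤ R + |c| := by linarith [abs_nonneg c]

/-! ### Rooftop volume -/

lemma volume_rooftop (n : ℕ) {P : Set (Fin n → ℝ)} (hm : MeasurableSet P)
    (i : Fin n) (c : ℝ) :
    volume (rooftop n P (fun u => u i + c))
      = ∫⁻ u in P, ENNReal.ofReal (u i + c) := by
  classical
  set f : (Fin n → ℝ) → ℝ := fun u => u i + c with hf
  set e := MeasurableEquiv.piFinSuccAbove (fun _ : Fin (n+1) => ℝ) (Fin.last n) with he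
  have hmp : MeasurePreserving e volume volume :=
    volume_preserving_piFinSuccAbove (fun _ : Fin (n+1) => ℝ) (Fin.last n)
  set Q' : Set (ℝ × (Fin n → ℝ)) := {p | p.2 ∈ P ∧ 0 ≤ p.1 ∧ p.1 ≤ f p.2} with hQ'
  have hfc : Continuous f := (continuous_apply i).add continuous_const
  have hQm : MeasurableSet Q' := by
    have h1 : MeasurableSet {p : ℝ × (Fin n → ℝ) | p.2 ∈ P} := measurable_snd hm
    have h2 : MeasurableSet {p : ℝ × (Fin n → ℝ) | 0 ≤ p.1} :=
      measurableSet_le measurable_const measurable_fst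
    have h3 : MeasurableSet {p : ℝ × (Fin n → ℝ) | p.1 ≤ f p.2} :=
      measurableSet_le measurable_fst (hfc.measurable.comp measurable_snd)
    exact (h1.inter (h2.inter h3) : _)
  have hpre : rooftop n P f = e ⁻¹' Q' := by
    ext w
    rw [mem_rooftop_iff]
    have h2 : (e w).2 = Fin.init w := by
      funext j
      show w ((Fin.last n).succAbove j) = w (Fin.castSucc j)
      rw [Fin.succAbove_last]
    have h1 : (e w).1 = w (Fin.last n) := rfl
    simp only [Set.mem_preimage, hQ', Set.mem_setOf_eq, h1, h2]
  rw [hpre, hmp.measure_preimage hQm.nullMeasurableSet]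
  rw [MeasureTheory.Measure.volume_eq_prod, MeasureTheory.Measure.prod_apply_symm hQm]
  have hsec : ∀ u : Fin n → ℝ,
      volume ((fun x => (x, u)) ⁻¹' Q') = Set.indicator P (fun u => ENNReal.ofReal (f u)) u := by
    intro u
    by_cases hu : u ∈ P
    · have : (fun x => (x, u)) ⁻¹' Q' = Set.Icc 0 (f u) := by
        ext h
        simp [hQ', hu, Set.mem_Icc]
      rw [this, Real.volume_Icc, Set.indicator_of_mem hu, sub_zero]
    · have : (fun x => (x, u)) ⁻¹' Q' = ∅ := by
        ext h
        simp [hQ', hu]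
      rw [this, measure_empty, Set.indicator_of_notMem hu]
  rw [lintegral_congr hsec, lintegral_indicator hm]

lemma toReal_volume_rooftop (n : ℕ) {P : Set (Fin n → ℝ)} (hm : MeasurableSet P)
    (i : Fin n) (c : ℝ) (hnn : ∀ u ∈ P, 0 ≤ u i + c) :
    (volume (rooftop n P (fun u => u i + c))).toReal = ∫ u in P, (u i + c) := by
  rw [volume_rooftop n hm i c]
  rw [MeasureTheory.integral_eq_lintegral_of_nonneg_ae]
  · exact (ae_restrict_iff' hm).2 (Filter.Eventually.of_forall hnn)
  · exact (((continuous_apply i).add continuous_const).aestronglyMeasurable).restrict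

/-! ### Counting lattice points in the dilated rooftop -/

lemma mem_intPts_rooftop_iff (n k : ℕ) (hk : 0 < k) (P : Set (Fin n → ℝ))
    (i : Fin n) (c : ℤ) (w : Fin (n+1) → ℤ) :
    w ∈ intPts (n+1) (dilate (n+1) k (rooftop n P (fun u => u i + (c : ℝ)))) ↔
      Fin.init w ∈ intPts n (dilate n k P) ∧ 0 ≤ w (Fin.last n)
        ∧ w (Fin.last n) ≤ w (Fin.castSucc i) + (k : ℤ) * c := by
  have hk' : (0 : ℝ) < k := Nat.cast_pos.mpr hk
  rw [intPts, Set.mem_setOf_eq, mem_dilate_iff _ k hk, mem_rooftop_iff]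
  have hinit : Fin.init ((k : ℝ)⁻¹ • (fun j => (w j : ℝ)))
      = (k : ℝ)⁻¹ • (fun j => ((Fin.init w) j : ℝ)) := rfl
  rw [hinit, ← mem_dilate_iff n k hk]
  have hA : ((k : ℝ)⁻¹ • fun j => (w j : ℝ)) (Fin.last n) = (k:ℝ)⁻¹ * (w (Fin.last n) : ℝ) := rfl
  have hB : ((k : ℝ)⁻¹ • fun j => ((Fin.init w) j : ℝ)) i = (k:ℝ)⁻¹ * (w (Fin.castSucc i) : ℝ) := rfl
  rw [hA, hB]
  have e1 : (fun j => ((Fin.init w) j : ℝ)) ∈ dilate n k P ↔ Fin.init w ∈ intPts n (dilate n k P) :=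
    Iff.rfl
  rw [e1]
  constructor
  · rintro ⟨h1, h2, h3⟩
    refine ⟨h1, ?_, ?_⟩
    · have : (0:ℝ) ≤ (w (Fin.last n) : ℝ) := by
        by_contra hneg
        push_neg at hneg
        nlinarith [mul_pos (inv_pos.mpr hk') (neg_pos.mpr hneg)]
      exact_mod_cast this
    · have h3' : (w (Fin.last n) : ℝ) ≤ (w (Fin.castSucc i) : ℝ) + (k:ℝ) * c := by
        have := mul_le_mul_of_nonneg_left h3 hk'.le
        rw [← mul_assoc, mul_inv_cancel₀ hk'.ne', one_mul, mul_add, ← mul_assoc,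
          mul_inv_cancel₀ hk'.ne', one_mul] at this
        linarith
      exact_mod_cast h3'
  · rintro ⟨h1, h2, h3⟩
    refine ⟨h1, ?_, ?_⟩
    · have h2' : (0:ℝ) ≤ (w (Fin.last n) : ℝ) := by exact_mod_cast h2
      positivity
    · have h3' : (w (Fin.last n) : ℝ) ≤ (w (Fin.castSucc i) : ℝ) + (k:ℝ) * c := by
        exact_mod_cast h3
      have := mul_le_mul_of_nonneg_left h3' (inv_pos.mpr hk').le
      rw [mul_add] at this
      calc (k:ℝ)⁻¹ * (w (Fin.last n) : ℝ)
          ≤ (k:ℝ)⁻¹ * (w (Fin.castSucc i) : ℝ) + (k:ℝ)⁻¹ * ((k:ℝ) * c) := this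
        _ = (k:ℝ)⁻¹ * (w (Fin.castSucc i) : ℝ) + c := by
            rw [← mul_assoc, inv_mul_cancel₀ hk'.ne', one_mul]

lemma finsum_latticePts (m : ℕ) (S : Set (Fin m → ℝ)) (hfin : (intPts m S).Finite) :
    (∑ᶠ u ∈ latticePts m S, u) = ∑ v ∈ hfin.toFinset, (fun i => (v i : ℝ)) := by
  classical
  have him : latticePts m S
      = ↑(hfin.toFinset.image (fun v : Fin m → ℤ => (fun i => (v i : ℝ)))) := by
    rw [latticePts_eq_image, Finset.coe_image, Set.Finite.coe_toFinset]
  rw [him, finsum_mem_coe_finset,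
    Finset.sum_image (fun a _ b _ h => intCast_injective m h)]

lemma ncard_latticePts_toFinset (m : ℕ) (S : Set (Fin m → ℝ)) (hfin : (intPts m S).Finite) :
    (latticePts m S).ncard = hfin.toFinset.card := by
  rw [ncard_latticePts, Set.ncard_eq_toFinset_card _ hfin]

lemma rooftop_count (n k : ℕ) (hk : 0 < k) {P : Set (Fin n → ℝ)} {R : ℝ}
    (hbd : P ⊆ Metric.closedBall 0 R) (i : Fin n) (c : ℤ)
    (hc : ∀ u ∈ P, 0 ≤ u i + (c : ℝ))
    (hA : (intPts n (dilate n k P)).Finite) :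
    ((latticePts (n+1) (dilate (n+1) k (rooftop n P (fun u => u i + (c : ℝ))))).ncard : ℝ)
      = (∑ v ∈ hA.toFinset, ((v i : ℝ)))
        + ((k : ℝ) * c + 1) * ((latticePts n (dilate n k P)).ncard : ℝ) := by
  classical
  set s := hA.toFinset with hs
  -- nonnegativity on s
  have hnn : ∀ v ∈ s, (0:ℤ) ≤ v i + (k:ℤ) * c := by
    intro v hv
    rw [hs, Set.Finite.mem_toFinset] at hv
    rw [intPts_dilate n k hk] at hv
    have := hc _ hv
    have hk' : (0:ℝ) < k := Nat.cast_pos.mpr hk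
    have h2 : (0:ℝ) ≤ (v i : ℝ) + (k:ℝ) * c := by
      have := mul_le_mul_of_nonneg_left this hk'.le
      rw [mul_zero, mul_add, mul_div_cancel₀ _ hk'.ne'] at this
      linarith
    exact_mod_cast h2
  set t : Finset ((_ : Fin n → ℤ) × ℤ) := s.sigma (fun v => Finset.Icc 0 (v i + (k:ℤ) * c))
    with ht
  set φ : (Σ _ : Fin n → ℤ, ℤ) → (Fin (n+1) → ℤ) := fun p => Fin.snoc p.1 p.2 with hφ
  have him : intPts (n+1) (dilate (n+1) k (rooftop n P (fun u => u i + (c : ℝ))))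
      = ↑(t.image φ) := by
    ext w
    rw [mem_intPts_rooftop_iff n k hk P i c w]
    simp only [Finset.coe_image, Set.mem_image, Finset.mem_coe, ht, Finset.mem_sigma,
      Finset.mem_Icc, hφ]
    constructor
    · rintro ⟨h1, h2, h3⟩
      refine ⟨⟨Fin.init w, w (Fin.last n)⟩, ⟨?_, h2, ?_⟩, ?_⟩
      · rw [hs, Set.Finite.mem_toFinset]; exact h1
      · exact h3
      · exact Fin.snoc_init_self w
    · rintro ⟨⟨v, z⟩, ⟨hv, hz0, hz1⟩, rfl⟩
      rw [hs, Set.Finite.mem_toFinset] at hv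
      refine ⟨?_, ?_, ?_⟩
      · rw [Fin.init_snoc]; exact hv
      · rw [Fin.snoc_last]; exact hz0
      · rw [Fin.snoc_last]
        rw [Fin.snoc_castSucc]; exact hz1
  have hφinj : Function.Injective φ := by
    intro p q h
    have h1 : p.1 = q.1 := by
      have := congrArg Fin.init h
      rwa [hφ, Fin.init_snoc, Fin.init_snoc] at this
    have h2 : p.2 = q.2 := by
      have := congrArg (fun g => g (Fin.last n)) h
      simpa [hφ, Fin.snoc_last] using this
    exact Sigma.ext h1 (heq_of_eq h2)
  rw [ncard_latticePts, him, Set.ncard_coe_finset,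
    Finset.card_image_of_injective _ hφinj, Finset.card_sigma]
  have hcard : ∀ v ∈ s, (Finset.Icc (0:ℤ) (v i + (k:ℤ) * c)).card
      = (v i + (k:ℤ) * c + 1).toNat := by
    intro v _
    rw [Int.card_Icc]
    congr 1
    ring
  rw [Finset.sum_congr rfl hcard]
  rw [Nat.cast_sum]
  have hterm : ∀ v ∈ s, (((v i + (k:ℤ) * c + 1).toNat : ℝ))
      = (v i : ℝ) + ((k:ℝ) * c + 1) := by
    intro v hv
    have h0 : (0:ℤ) ≤ v i + (k:ℤ) * c + 1 := by linarith [hnn v hv]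
    rw [← Int.cast_natCast, Int.toNat_of_nonneg h0]
    push_cast
    ring
  rw [Finset.sum_congr rfl hterm, Finset.sum_add_distrib, Finset.sum_const, nsmul_eq_mul]
  rw [ncard_latticePts_toFinset n _ hA, ← hs]
  ring

/-- if the quantized barycenter takes the same value `λ` at `n+1` distinct
positive integers, then it equals `λ` at every positive integer, and `λ = Bc(P)`. -/
theorem Bck_constant_implies_Bc
    (n : ℕ) (P : Set (Fin n → ℝ))
    (hP : IsLatticePolytope n P) (hdim : IsFullDim n P)
    (C : Fin n → ℤ) (hC : ∀ i : Fin n, ∀ u ∈ P, 0 ≤ u i + (C i : ℝ))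
    (E : Polynomial ℝ) (Ei : Fin n → Polynomial ℝ)
    (hEdeg : E.natDegree ≤ n) (hEideg : ∀ i, (Ei i).natDegree ≤ n + 1)
    (hE0 : E.eval 0 = 1) (hEi0 : ∀ i, (Ei i).eval 0 = 1)
    (hE : ∀ k : ℕ, 0 < k → E.eval (k : ℝ) = ((latticePts n (dilate n k P)).ncard : ℝ))
    (hEi : ∀ i : Fin n, ∀ k : ℕ, 0 < k →
      (Ei i).eval (k : ℝ)
        = ((latticePts (n+1)
            (dilate (n+1) k (rooftop n P (fun u => u i + (C i : ℝ))))).ncard : ℝ))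
    (ks : Fin (n+1) → ℕ) (hks : StrictMono ks) (hks0 : 0 < ks 0)
    (lam : Fin n → ℝ) (hlam : ∀ j : Fin (n+1), Bck n (ks j) P = lam) :
    (∀ k : ℕ, 0 < k → Bck n k P = lam) ∧ lam = Bc n P := by
    classical
  obtain ⟨V, hVne, hVlat, hPV⟩ := hP
  have hPconv : Convex ℝ P := hPV ▸ convex_convexHull ℝ _
  have hPcomp : IsCompact P := hPV ▸ V.finite_toSet.isCompact_convexHull ℝ
  have hPcl : IsClosed P := hPcomp.isClosed
  have hPm : MeasurableSet P := hPcl.measurableSet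
  obtain ⟨R, hR0, hbd⟩ : ∃ R, 0 ≤ R ∧ P ⊆ Metric.closedBall 0 R := by
    obtain ⟨r, hr⟩ := hPcomp.isBounded.subset_closedBall (0 : Fin n → ℝ)
    exact ⟨max r 0, le_max_right _ _,
      hr.trans (Metric.closedBall_subset_closedBall (le_max_left _ _))⟩
  have hvolfin : volume P ≠ ⊤ := hPcomp.measure_lt_top.ne
  have hvolpos : 0 < (volume P).toReal := by
    refine ENNReal.toReal_pos ?_ hvolfin
    have h1 : 0 < volume (interior P) := isOpen_interior.measure_pos volume hdim
    exact (lt_of_lt_of_le h1 (measure_mono interior_subset)).ne'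
  -- finiteness of integer points of dilates
  have hLfin : ∀ k : ℕ, (intPts n (dilate n k P)).Finite :=
    fun k => intPts_finite n (dilate_subset_ball n k hbd)
  have hLPfin : ∀ k : ℕ, (latticePts n (dilate n k P)).Finite := by
    intro k
    rw [latticePts_eq_image]
    exact (hLfin k).image _
  -- nonemptiness
  have hLne : ∀ k : ℕ, 0 < k → (latticePts n (dilate n k P)).Nonempty := by
    intro k hk
    obtain ⟨v₀, hv₀V⟩ := hVne
    have hv₀P : v₀ ∈ P := hPV ▸ subset_convexHull ℝ (V : Set (Fin n → ℝ)) hv₀V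
    refine ⟨(k : ℝ) • v₀, ⟨v₀, hv₀P, rfl⟩, ?_⟩
    intro i
    obtain ⟨z, hz⟩ := hVlat v₀ hv₀V i
    exact ⟨(k : ℤ) * z, by rw [Pi.smul_apply, smul_eq_mul, hz]; push_cast; ring⟩
  have hcardpos : ∀ k : ℕ, 0 < k → (0:ℝ) < ((latticePts n (dilate n k P)).ncard : ℝ) := by
    intro k hk
    have := (Set.ncard_pos (hLPfin k)).mpr (hLne k hk)
    exact_mod_cast this
  -- Bck componentwise
  have hBck : ∀ k : ℕ, 0 < k → ∀ i : Fin n,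
      Bck n k P i = ((k : ℝ) * ((latticePts n (dilate n k P)).ncard : ℝ))⁻¹
        * (∑ v ∈ (hLfin k).toFinset, (v i : ℝ)) := by
    intro k hk i
    show (((k : ℝ) * ((latticePts n (dilate n k P)).ncard : ℝ))⁻¹
      • ∑ᶠ u ∈ latticePts n (dilate n k P), u) i = _
    rw [finsum_latticePts n _ (hLfin k)]
    rw [Pi.smul_apply, Finset.sum_apply, smul_eq_mul]
  -- counting identity for Ei
  have hEi' : ∀ i : Fin n, ∀ k : ℕ, (hk : 0 < k) →
      (Ei i).eval (k : ℝ) = (∑ v ∈ (hLfin k).toFinset, (v i : ℝ))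
        + ((k : ℝ) * (C i : ℝ) + 1) * ((latticePts n (dilate n k P)).ncard : ℝ) := by
    intro i k hk
    rw [hEi i k hk, rooftop_count n k hk hbd i (C i) (hC i) (hLfin k)]
  -- the polynomial G i
  set G : Fin n → Polynomial ℝ := fun i =>
    Ei i - (Polynomial.C ((C i : ℝ)) * X + 1 + Polynomial.C (lam i) * X) * E with hG
  have hGeval : ∀ i : Fin n, ∀ k : ℕ, 0 < k →
      (G i).eval (k : ℝ) = (∑ v ∈ (hLfin k).toFinset, (v i : ℝ))
        - lam i * ((k : ℝ) * ((latticePts n (dilate n k P)).ncard : ℝ)) := by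
    intro i k hk
    simp only [hG, eval_sub, eval_mul, eval_add, eval_one, eval_X, eval_C]
    rw [hEi' i k hk, hE k hk]
    ring
  have hdegG : ∀ i : Fin n, (G i).natDegree ≤ n + 1 := by
    intro i
    refine le_trans (Polynomial.natDegree_sub_le _ _) ?_
    rw [max_le_iff]
    refine ⟨hEideg i, ?_⟩
    refine le_trans (Polynomial.natDegree_mul_le) ?_
    have h1 : (Polynomial.C ((C i : ℝ)) * X + 1 + Polynomial.C (lam i) * X).natDegree ≤ 1 := by
      refine le_trans (Polynomial.natDegree_add_le _ _) ?_
      rw [max_le_iff]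
      refine ⟨?_, le_trans (Polynomial.natDegree_C_mul_le _ _) Polynomial.natDegree_X.le⟩
      refine le_trans (Polynomial.natDegree_add_le _ _) ?_
      rw [max_le_iff]
      exact ⟨le_trans (Polynomial.natDegree_C_mul_le _ _) Polynomial.natDegree_X.le, by simp⟩
    calc (Polynomial.C ((C i : ℝ)) * X + 1 + Polynomial.C (lam i) * X).natDegree + E.natDegree
        ≤ 1 + n := add_le_add h1 hEdeg
      _ = n + 1 := by omega
  have hkspos : ∀ j : Fin (n+1), 0 < ks j :=
    fun j => lt_of_lt_of_le hks0 (hks.monotone (Fin.zero_le j))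
  -- sum identity at the points ks j
  have hsum_ks : ∀ i : Fin n, ∀ j : Fin (n+1),
      (∑ v ∈ (hLfin (ks j)).toFinset, (v i : ℝ))
        = lam i * ((ks j : ℝ) * ((latticePts n (dilate n (ks j) P)).ncard : ℝ)) := by
    intro i j
    have hcomp : Bck n (ks j) P i = lam i := congrFun (hlam j) i
    rw [hBck (ks j) (hkspos j) i] at hcomp
    have hne : ((ks j : ℝ) * ((latticePts n (dilate n (ks j) P)).ncard : ℝ)) ≠ 0 := by
      have h1 : (0:ℝ) < (ks j : ℝ) := Nat.cast_pos.mpr (hkspos j)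
      have h2 := hcardpos (ks j) (hkspos j)
      positivity
    rw [inv_mul_eq_iff_eq_mul₀ hne] at hcomp
    rw [hcomp]
    ring
  -- G i vanishes at n+2 points, hence is zero
  have hGzero : ∀ i : Fin n, G i = 0 := by
    intro i
    set f : Fin (n+2) → ℝ := Fin.cases 0 (fun j => ((ks j : ℕ) : ℝ)) with hf
    have hfinj : Function.Injective f := by
      intro a b hab
      induction a using Fin.cases with
      | zero =>
        induction b using Fin.cases with
        | zero => rfl
        | succ b' =>
          exfalso
          rw [hf] at hab
          simp only [Fin.cases_zero, Fin.cases_succ] at hab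
          have : (0:ℝ) < (ks b' : ℝ) := Nat.cast_pos.mpr (hkspos b')
          linarith [hab]
      | succ a' =>
        induction b using Fin.cases with
        | zero =>
          exfalso
          rw [hf] at hab
          simp only [Fin.cases_zero, Fin.cases_succ] at hab
          have : (0:ℝ) < (ks a' : ℝ) := Nat.cast_pos.mpr (hkspos a')
          linarith [hab]
        | succ b' =>
          rw [hf] at hab
          simp only [Fin.cases_succ] at hab
          have h1 : ks a' = ks b' := Nat.cast_injective hab
          rw [hks.injective h1]
    have hroots : ∀ j : Fin (n+2), (G i).eval (f j) = 0 := by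
      intro j
      induction j using Fin.cases with
      | zero =>
        rw [hf]
        simp only [Fin.cases_zero]
        simp only [hG, eval_sub, eval_mul, eval_add, eval_one, eval_X, eval_C, hE0, hEi0 i]
        ring
      | succ j' =>
        rw [hf]
        simp only [Fin.cases_succ]
        rw [hGeval i (ks j') (hkspos j'), hsum_ks i j']
        ring
    refine Polynomial.eq_zero_of_natDegree_lt_card_of_eval_eq_zero (G i) hfinj hroots ?_
    rw [Fintype.card_fin]
    have := hdegG i
    omega
  -- Part A : Bck is constant
  have partA : ∀ k : ℕ, 0 < k → Bck n k P = lam := by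
    intro k hk
    funext i
    have h0 := hGeval i k hk
    rw [hGzero i, eval_zero] at h0
    have hsum : (∑ v ∈ (hLfin k).toFinset, (v i : ℝ))
        = lam i * ((k : ℝ) * ((latticePts n (dilate n k P)).ncard : ℝ)) := by linarith
    rw [hBck k hk i, hsum]
    have h1 : (0:ℝ) < (k : ℝ) := Nat.cast_pos.mpr hk
    have h2 := hcardpos k hk
    have hne : ((k : ℝ) * ((latticePts n (dilate n k P)).ncard : ℝ)) ≠ 0 := by positivity
    rw [mul_comm (lam i), inv_mul_cancel_left₀ hne]
  refine ⟨partA, ?_⟩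
  -- Part B : lam = Bc
  funext i
  -- the rooftop Q
  set Q : Set (Fin (n+1) → ℝ) := rooftop n P (fun u => u i + (C i : ℝ)) with hQdef
  have hQconv : Convex ℝ Q := rooftop_convex n hPconv i (C i : ℝ)
  have hQcl : IsClosed Q := rooftop_closed n hPcl i (C i : ℝ)
  have hQbd : Q ⊆ Metric.closedBall 0 (R + |(C i : ℝ)|) :=
    rooftop_subset_ball n hR0 hbd i (C i : ℝ)
  have hLP : Tendsto (fun k : ℕ => ((latticePts n (dilate n k P)).ncard : ℝ) / (k : ℝ) ^ n)
      atTop (𝓝 (volume P).toReal) := tendsto_latticeCount n P hPconv hPcl R hbd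
  have hLQ : Tendsto
      (fun k : ℕ => ((latticePts (n+1) (dilate (n+1) k Q)).ncard : ℝ) / (k : ℝ) ^ (n+1))
      atTop (𝓝 (volume Q).toReal) :=
    tendsto_latticeCount (n+1) Q hQconv hQcl _ hQbd
  -- Ei i = (C i X + 1 + lam i X) * E as polynomials
  have hpolyid : Ei i = (Polynomial.C ((C i : ℝ)) * X + 1 + Polynomial.C (lam i) * X) * E :=
    sub_eq_zero.mp (hGzero i)
  -- the ratio identity
  have hratio : ∀ᶠ k : ℕ in atTop,
      ((latticePts (n+1) (dilate (n+1) k Q)).ncard : ℝ) / (k : ℝ) ^ (n+1)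
        = (((C i : ℝ) + lam i) + 1 / (k : ℝ))
            * (((latticePts n (dilate n k P)).ncard : ℝ) / (k : ℝ) ^ n) := by
    filter_upwards [eventually_gt_atTop 0] with k hk
    have h1 : (0:ℝ) < (k : ℝ) := Nat.cast_pos.mpr hk
    rw [← hE k hk, ← hEi i k hk, hpolyid]
    simp only [eval_mul, eval_add, eval_one, eval_X, eval_C]
    field_simp
    ring
  have hRHS : Tendsto
      (fun k : ℕ => (((C i : ℝ) + lam i) + 1 / (k : ℝ))
        * (((latticePts n (dilate n k P)).ncard : ℝ) / (k : ℝ) ^ n)) atTop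
      (𝓝 ((((C i : ℝ) + lam i) + 0) * (volume P).toReal)) := by
    exact (Tendsto.add tendsto_const_nhds tendsto_one_div_atTop_nhds_zero_nat).mul hLP
  rw [add_zero] at hRHS
  have hVQ : (volume Q).toReal = ((C i : ℝ) + lam i) * (volume P).toReal :=
    tendsto_nhds_unique (hLQ.congr' hratio) hRHS
  -- volume of Q as an integral
  have hVQ2 : (volume Q).toReal = ∫ u in P, (u i + (C i : ℝ)) :=
    toReal_volume_rooftop n hPm i (C i : ℝ) (hC i)
  have hInt1 : IntegrableOn (fun u : Fin n → ℝ => u i) P volume :=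
    (continuous_apply i).continuousOn.integrableOn_compact hPcomp
  have hInt2 : IntegrableOn (fun _ : Fin n → ℝ => (C i : ℝ)) P volume :=
    integrableOn_const hPcomp.measure_lt_top.ne
  have hsplit : ∫ u in P, (u i + (C i : ℝ))
      = (∫ u in P, u i) + (C i : ℝ) * (volume P).toReal := by
    rw [MeasureTheory.integral_add hInt1 hInt2, MeasureTheory.setIntegral_const,
      smul_eq_mul, measureReal_def]
    ring
  have hfinal : lam i * (volume P).toReal = ∫ u in P, u i := by
    have := hVQ.symm.trans (hVQ2.trans hsplit)
    nlinarith [this]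
  show lam i = (∫ x in P, x i) / (volume P).toReal
  rw [← hfinal]
  field_simp
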